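/- Let X with E|X|^p < ∞ for some 0 < p < 2 and r > p. Then ∑_{k=1}^∞ (Log k)^r / k^{r/p} · E[|X|^r · 1{|X|^r ≤ k^{r/p} / (Log k)^{r²/(r-p)}}] ≤ C(p,r) E|X|^p for some constant C(p,r) depending only on p and r. -/

import Mathlib

open MeasureTheory Filter

noncomputable def Log (x : ℝ) : ℝ := Real.log (max x (Real.exp 1))

lemma one_le_Log (x : ℝ) : 1 ≤ Log x := by
  unfold Log
  calc (1:ℝ) = Real.log (Real.exp 1) := (Real.log_exp 1).symm
    _ ≤ _ := Real.log_le_log (Real.exp_pos 1) (le_max_right _ _)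

lemma Log_pos (x : ℝ) : 0 < Log x := lt_of_lt_of_le one_pos (one_le_Log x)

lemma Log_natCast (k : ℕ) (hk : 3 ≤ k) : Log k = Real.log k := by
  unfold Log
  rw [max_eq_left]
  calc Real.exp 1 ≤ 3 := by
        have := Real.exp_one_lt_d9
        linarith
    _ ≤ (k:ℝ) := by exact_mod_cast hk

lemma aux_deriv (r s t : ℝ) (ht : 3 ≤ t) :
    HasDerivAt (fun u : ℝ => Real.log u ^ r * u ^ (1 - s))
      (-(t ^ (-s) * Real.log t ^ (r - 1) * ((s - 1) * Real.log t - r))) t := by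
  have ht0 : (0:ℝ) < t := by linarith
  have hlt : (1:ℝ) < t := by linarith
  have hlog : 0 < Real.log t := Real.log_pos hlt
  have h2 : HasDerivAt (fun u : ℝ => Real.log u ^ r) (t⁻¹ * r * Real.log t ^ (r - 1)) t :=
    (Real.hasDerivAt_log ht0.ne').rpow_const (Or.inl hlog.ne')
  have h3 : HasDerivAt (fun u : ℝ => u ^ (1 - s)) ((1 - s) * t ^ (1 - s - 1)) t :=
    Real.hasDerivAt_rpow_const (Or.inl ht0.ne')
  have h := h2.mul h3
  refine h.congr_deriv ?_
  have e1 : t ^ (1 - s) = t ^ (-s) * t := by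
    rw [show (1:ℝ) - s = -s + 1 by ring, Real.rpow_add_one ht0.ne']
  have e2 : t ^ (1 - s - 1) = t ^ (-s) := by
    rw [show (1:ℝ) - s - 1 = -s by ring]
  have e3 : Real.log t ^ r = Real.log t ^ (r - 1) * Real.log t := by
    conv_lhs => rw [show r = r - 1 + 1 by ring, Real.rpow_add_one hlog.ne']
  rw [e1, e2, e3]
  field_simp
  ring

noncomputable def ccf (p r : ℝ) (k : ℕ) : ℝ := Log k ^ r / (k:ℝ) ^ (r/p)
noncomputable def FFf (p r : ℝ) (k : ℕ) : ℝ := Log k ^ r * (k:ℝ) ^ (1 - r/p)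

lemma FFf_nonneg (p r : ℝ) (k : ℕ) : 0 ≤ FFf p r k :=
  mul_nonneg (Real.rpow_nonneg (Log_pos _).le _) (Real.rpow_nonneg (Nat.cast_nonneg _) _)

lemma ccf_nonneg (p r : ℝ) (k : ℕ) : 0 ≤ ccf p r k :=
  div_nonneg (Real.rpow_nonneg (Log_pos _).le _) (Real.rpow_nonneg (Nat.cast_nonneg _) _)

lemma lemA (p r : ℝ) (hp0 : 0 < p) (hr : p < r) (k : ℕ)
    (hk3 : 3 ≤ k) (hklog : 2 * r / (r/p - 1) ≤ Real.log k) :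
    ccf p r k ≤ (((r/p - 1)/2) * 2 ^ (-(r/p)))⁻¹ * (FFf p r k - FFf p r (k+1)) := by
  set s := r/p with hsdef
  have hr0 : 0 < r := hp0.trans hr
  have hs1 : 1 < s := (one_lt_div hp0).mpr hr
  have hk3' : (3:ℝ) ≤ (k:ℝ) := by exact_mod_cast hk3
  have hk0 : (0:ℝ) < (k:ℝ) := by linarith
  -- MVT
  obtain ⟨c, hc, hslope⟩ := exists_hasDerivAt_eq_slope
    (fun u : ℝ => Real.log u ^ r * u ^ (1 - s))
    (fun u : ℝ => -(u ^ (-s) * Real.log u ^ (r - 1) * ((s - 1) * Real.log u - r)))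
    (show (k:ℝ) < (k:ℝ) + 1 by linarith)
    (fun u hu => ((aux_deriv r s u (le_trans hk3' hu.1)).continuousAt).continuousWithinAt)
    (fun u hu => aux_deriv r s u (le_trans hk3' hu.1.le))
  have hc3 : (3:ℝ) ≤ c := le_trans hk3' hc.1.le
  have hc0 : (0:ℝ) < c := by linarith
  have hlogc : 0 < Real.log c := Real.log_pos (by linarith)
  have hlogk0 : 0 < Real.log k := Real.log_pos (by linarith)
  have hL : Real.log k ≤ Real.log c := Real.log_le_log hk0 hc.1.le
  have hA : 2 * r ≤ (s - 1) * Real.log c := by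
    have h1 : 2 * r / (s - 1) ≤ Real.log c := le_trans hklog hL
    have h2 : 0 < s - 1 := by linarith
    calc 2 * r = (2 * r / (s-1)) * (s-1) := by field_simp
      _ ≤ Real.log c * (s - 1) := by gcongr
      _ = (s-1) * Real.log c := by ring
  -- F k - F (k+1) = -(deriv at c)
  have hdiff : Real.log (k:ℝ) ^ r * (k:ℝ) ^ (1 - s)
      - Real.log ((k:ℝ)+1) ^ r * ((k:ℝ)+1) ^ (1 - s)
      = c ^ (-s) * Real.log c ^ (r - 1) * ((s - 1) * Real.log c - r) := by
    have : ((k:ℝ) + 1) - (k:ℝ) = 1 := by ring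
    rw [this, div_one] at hslope
    linarith
  -- lower bound on the derivative
  have hub1 : (s-1)/2 * Real.log k ^ r ≤ Real.log c ^ (r - 1) * ((s - 1) * Real.log c - r) := by
    have e : Real.log c ^ (r-1) * Real.log c = Real.log c ^ r := by
      rw [← Real.rpow_add_one hlogc.ne']; ring_nf
    have h1 : (s-1)/2 * Real.log c ≤ (s - 1) * Real.log c - r := by linarith
    calc (s-1)/2 * Real.log k ^ r ≤ (s-1)/2 * Real.log c ^ r := by
          have : Real.log k ^ r ≤ Real.log c ^ r :=
            Real.rpow_le_rpow hlogk0.le hL hr0.le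
          have h2 : (0:ℝ) ≤ (s-1)/2 := by linarith
          exact mul_le_mul_of_nonneg_left this h2
      _ = Real.log c ^ (r-1) * ((s-1)/2 * Real.log c) := by rw [← e]; ring
      _ ≤ Real.log c ^ (r-1) * ((s - 1) * Real.log c - r) := by
          have := Real.rpow_nonneg hlogc.le (r-1)
          exact mul_le_mul_of_nonneg_left h1 this
  have hub2 : 2 ^ (-s) * (k:ℝ) ^ (-s) ≤ c ^ (-s) := by
    have hck : c ≤ 2 * (k:ℝ) := by
      have := hc.2
      linarith
    have h1 : c ^ s ≤ (2 * (k:ℝ)) ^ s := Real.rpow_le_rpow hc0.le hck (by linarith)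
    have h2 : (2 * (k:ℝ)) ^ s = 2 ^ s * (k:ℝ) ^ s := Real.mul_rpow (by norm_num) hk0.le
    rw [Real.rpow_neg hc0.le, Real.rpow_neg hk0.le, Real.rpow_neg (by norm_num : (0:ℝ) ≤ 2)]
    rw [← mul_inv]
    apply inv_anti₀ (Real.rpow_pos_of_pos hc0 s)
    rw [← h2]; exact h1
  have hmid0 : (0:ℝ) ≤ (s-1)/2 * Real.log k ^ r :=
    mul_nonneg (by linarith) (Real.rpow_nonneg hlogk0.le _)
  have hkey : 2 ^ (-s) * (k:ℝ) ^ (-s) * ((s-1)/2 * Real.log k ^ r)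
      ≤ c ^ (-s) * (Real.log c ^ (r - 1) * ((s - 1) * Real.log c - r)) := by
    apply mul_le_mul hub2 hub1 hmid0 (Real.rpow_nonneg hc0.le _)
  -- identify with ccf / FFf
  have hcc : ccf p r k = Real.log k ^ r * (k:ℝ) ^ (-s) := by
    rw [ccf, Log_natCast k hk3, Real.rpow_neg hk0.le, div_eq_mul_inv]
  have hFk : FFf p r k = Real.log (k:ℝ) ^ r * (k:ℝ) ^ (1 - s) := by
    rw [FFf, Log_natCast k hk3]
  have hFk1 : FFf p r (k+1) = Real.log ((k:ℝ)+1) ^ r * ((k:ℝ)+1) ^ (1 - s) := by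
    rw [FFf, Log_natCast (k+1) (by omega)]
    push_cast
    ring_nf
    rw [hsdef]; ring_nf
  have ha : (0:ℝ) < ((s - 1)/2) * 2 ^ (-s) :=
    mul_pos (by linarith) (Real.rpow_pos_of_pos (by norm_num) _)
  have hfinal : ((s - 1)/2) * 2 ^ (-s) * ccf p r k ≤ FFf p r k - FFf p r (k+1) := by
    rw [hcc, hFk, hFk1, hdiff]
    calc ((s - 1)/2) * 2 ^ (-s) * (Real.log k ^ r * (k:ℝ) ^ (-s))
        = 2 ^ (-s) * (k:ℝ) ^ (-s) * ((s-1)/2 * Real.log k ^ r) := by ring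
      _ ≤ c ^ (-s) * (Real.log c ^ (r - 1) * ((s - 1) * Real.log c - r)) := hkey
      _ = c ^ (-s) * Real.log c ^ (r - 1) * ((s - 1) * Real.log c - r) := by ring
  calc ccf p r k = (((s - 1)/2) * 2 ^ (-s))⁻¹ * ((((s - 1)/2) * 2 ^ (-s)) * ccf p r k) := by
        rw [← mul_assoc, inv_mul_cancel₀ ha.ne', one_mul]
    _ ≤ (((s - 1)/2) * 2 ^ (-s))⁻¹ * (FFf p r k - FFf p r (k+1)) := by
        exact mul_le_mul_of_nonneg_left hfinal (inv_nonneg.mpr ha.le)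

lemma tail_lemma (p r : ℝ) (hp0 : 0 < p) (hr : p < r) (k1 : ℕ) (hk13 : 3 ≤ k1)
    (hk1log : ∀ k : ℕ, k1 ≤ k → 2 * r / (r/p - 1) ≤ Real.log k)
    (K N : ℕ) (hK : k1 ≤ K) :
    ∑ k ∈ Finset.Icc K N, ccf p r k ≤ (((r/p - 1)/2) * 2 ^ (-(r/p)))⁻¹ * FFf p r K := by
  set C1 := (((r/p - 1)/2) * 2 ^ (-(r/p)))⁻¹ with hC1
  have hs1 : 1 < r/p := (one_lt_div hp0).mpr hr
  have hC1pos : 0 < C1 := by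
    rw [hC1]
    exact inv_pos.mpr (mul_pos (by linarith) (Real.rpow_pos_of_pos (by norm_num) _))
  have hstep : ∀ k : ℕ, k1 ≤ k → ccf p r k ≤ C1 * (FFf p r k - FFf p r (k+1)) :=
    fun k hk => lemA p r hp0 hr k (le_trans hk13 hk) (hk1log k hk)
  have hmain : ∀ n : ℕ, ∑ k ∈ Finset.Icc K (K + n), ccf p r k
      ≤ C1 * (FFf p r K - FFf p r (K + n + 1)) := by
    intro n
    induction n with
    | zero => simpa using hstep K hK
    | succ n ih =>
        rw [show K + (n+1) = (K + n) + 1 by ring]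
        rw [Finset.sum_Icc_succ_top (by omega : K ≤ K + n + 1)]
        have h2 := hstep (K + n + 1) (by omega)
        push_cast at h2 ⊢
        have : FFf p r (K + n + 1 + 1) = FFf p r (K + (n+1) + 1) := by ring_nf
        rw [this] at h2
        calc ∑ k ∈ Finset.Icc K (K + n), ccf p r k + ccf p r (K + n + 1)
            ≤ C1 * (FFf p r K - FFf p r (K + n + 1))
              + C1 * (FFf p r (K + n + 1) - FFf p r (K + (n+1) + 1)) := by
              exact add_le_add ih h2
          _ = C1 * (FFf p r K - FFf p r (K + (n+1) + 1)) := by ring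
  rcases le_or_gt K N with h | h
  · obtain ⟨n, rfl⟩ := Nat.exists_eq_add_of_le h
    calc ∑ k ∈ Finset.Icc K (K + n), ccf p r k ≤ C1 * (FFf p r K - FFf p r (K + n + 1)) :=
          hmain n
      _ ≤ C1 * FFf p r K := by
          have := FFf_nonneg p r (K + n + 1)
          nlinarith
  · rw [Finset.Icc_eq_empty (by omega), Finset.sum_empty]
    exact mul_nonneg hC1pos.le (FFf_nonneg p r K)

lemma cond_M (p r : ℝ) (hp0 : 0 < p) (hr : p < r) (k : ℕ) (hk1 : 1 ≤ k) (x : ℝ) (hx : 0 ≤ x)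
    (hcond : x ^ r ≤ (k:ℝ) ^ (r/p) / Log (k:ℝ) ^ (r^2/(r-p))) :
    x ^ (r - p) * Log (k:ℝ) ^ r * (k:ℝ) ^ (1 - r/p) ≤ 1 := by
  have hr0 : 0 < r := hp0.trans hr
  have hrp : 0 < r - p := by linarith
  have hk0 : (0:ℝ) < (k:ℝ) := by exact_mod_cast hk1
  have hL0 : 0 < Log (k:ℝ) := Log_pos _
  have he : (0:ℝ) ≤ (r - p)/r := by positivity
  have h1 : (x ^ r) ^ ((r-p)/r) ≤ ((k:ℝ) ^ (r/p) / Log (k:ℝ) ^ (r^2/(r-p))) ^ ((r-p)/r) :=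
    Real.rpow_le_rpow (Real.rpow_nonneg hx r) hcond he
  have e1 : (x ^ r) ^ ((r-p)/r) = x ^ (r - p) := by
    rw [← Real.rpow_mul hx]
    congr 1
    field_simp
  have e2 : ((k:ℝ) ^ (r/p) / Log (k:ℝ) ^ (r^2/(r-p))) ^ ((r-p)/r)
      = (k:ℝ) ^ ((r-p)/p) / Log (k:ℝ) ^ r := by
    rw [Real.div_rpow (Real.rpow_nonneg hk0.le _) (Real.rpow_nonneg hL0.le _)]
    rw [← Real.rpow_mul hk0.le, ← Real.rpow_mul hL0.le]
    have ea : r / p * ((r - p) / r) = (r - p) / p := by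
      field_simp
    have eb : r ^ 2 / (r - p) * ((r - p) / r) = r := by
      field_simp
    rw [ea, eb]
  rw [e1, e2] at h1
  -- now M ≤ 1
  have h2 : x ^ (r-p) * Log (k:ℝ) ^ r ≤ (k:ℝ) ^ ((r-p)/p) := by
    have hLr : 0 < Log (k:ℝ) ^ r := Real.rpow_pos_of_pos hL0 r
    calc x ^ (r-p) * Log (k:ℝ) ^ r ≤ ((k:ℝ) ^ ((r-p)/p) / Log (k:ℝ) ^ r) * Log (k:ℝ) ^ r :=
          mul_le_mul_of_nonneg_right h1 hLr.le
      _ = (k:ℝ) ^ ((r-p)/p) := by field_simp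
  calc x ^ (r - p) * Log (k:ℝ) ^ r * (k:ℝ) ^ (1 - r/p)
      ≤ (k:ℝ) ^ ((r-p)/p) * (k:ℝ) ^ (1 - r/p) := by
        apply mul_le_mul_of_nonneg_right h2 (Real.rpow_nonneg hk0.le _)
    _ = (k:ℝ) ^ ((r-p)/p + (1 - r/p)) := (Real.rpow_add hk0 _ _).symm
    _ = 1 := by
        rw [show (r-p)/p + (1 - r/p) = 0 by field_simp; ring, Real.rpow_zero]

lemma termK_le (p r : ℝ) (hp0 : 0 < p) (hr : p < r) (k : ℕ) (hk1 : 1 ≤ k) (x : ℝ)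
    (hx0 : 0 < x)
    (hcond : x ^ r ≤ (k:ℝ) ^ (r/p) / Log (k:ℝ) ^ (r^2/(r-p))) :
    x ^ r * FFf p r k ≤ x ^ p := by
  have hxr : x ^ r = x ^ p * x ^ (r - p) := by
    rw [← Real.rpow_add hx0]; congr 1; ring
  have hM := cond_M p r hp0 hr k hk1 x hx0.le hcond
  have hxp : (0:ℝ) ≤ x ^ p := Real.rpow_nonneg hx0.le p
  calc x ^ r * FFf p r k
      = x ^ p * (x ^ (r - p) * Log (k:ℝ) ^ r * (k:ℝ) ^ (1 - r/p)) := by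
        rw [FFf, hxr]; ring
    _ ≤ x ^ p * 1 := mul_le_mul_of_nonneg_left hM hxp
    _ = x ^ p := mul_one _

lemma term_le (p r : ℝ) (hp0 : 0 < p) (hr : p < r) (k : ℕ) (hk1 : 1 ≤ k) (x : ℝ)
    (hx0 : 0 < x)
    (hcond : x ^ r ≤ (k:ℝ) ^ (r/p) / Log (k:ℝ) ^ (r^2/(r-p))) :
    ccf p r k * x ^ r ≤ x ^ p := by
  have hk0 : (0:ℝ) < (k:ℝ) := by exact_mod_cast hk1
  have hxr : x ^ r = x ^ p * x ^ (r - p) := by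
    rw [← Real.rpow_add hx0]; congr 1; ring
  have hM := cond_M p r hp0 hr k hk1 x hx0.le hcond
  have hM0 : 0 ≤ x ^ (r - p) * Log (k:ℝ) ^ r * (k:ℝ) ^ (1 - r/p) :=
    mul_nonneg (mul_nonneg (Real.rpow_nonneg hx0.le _) (Real.rpow_nonneg (Log_pos _).le _))
      (Real.rpow_nonneg hk0.le _)
  have hxp : (0:ℝ) ≤ x ^ p := Real.rpow_nonneg hx0.le p
  have hinv : ((k:ℝ))⁻¹ ≤ 1 := by
    rw [inv_le_one_iff₀]
    right
    exact_mod_cast hk1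
  have e1 : (k:ℝ) ^ (1 - r/p) = (k:ℝ) * ((k:ℝ) ^ (r/p))⁻¹ := by
    rw [show (1:ℝ) - r/p = 1 + (-(r/p)) by ring, Real.rpow_add hk0, Real.rpow_one,
      Real.rpow_neg hk0.le]
  have hks : (0:ℝ) < (k:ℝ) ^ (r/p) := Real.rpow_pos_of_pos hk0 _
  have hid : ccf p r k * x ^ r
      = x ^ p * (x ^ (r - p) * Log (k:ℝ) ^ r * (k:ℝ) ^ (1 - r/p)) * ((k:ℝ))⁻¹ := by
    rw [ccf, hxr, e1]
    field_simp
  rw [hid]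
  calc x ^ p * (x ^ (r - p) * Log (k:ℝ) ^ r * (k:ℝ) ^ (1 - r/p)) * ((k:ℝ))⁻¹
      ≤ x ^ p * (x ^ (r - p) * Log (k:ℝ) ^ r * (k:ℝ) ^ (1 - r/p)) * 1 := by
        exact mul_le_mul_of_nonneg_left hinv (mul_nonneg hxp hM0)
    _ = x ^ p * (x ^ (r - p) * Log (k:ℝ) ^ r * (k:ℝ) ^ (1 - r/p)) := mul_one _
    _ ≤ x ^ p * 1 := mul_le_mul_of_nonneg_left hM hxp
    _ = x ^ p := mul_one _

lemma real_key (p r : ℝ) (hp0 : 0 < p) (hr : p < r) :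
    ∃ C : ℝ, 0 < C ∧ ∀ x : ℝ, 0 ≤ x → ∀ t : Finset ℕ,
      ∑ k ∈ t, (if x ^ r ≤ (k:ℝ) ^ (r/p) / Log (k:ℝ) ^ (r^2/(r-p))
        then Log (k:ℝ) ^ r / (k:ℝ) ^ (r/p) * x ^ r else 0) ≤ C * x ^ p := by
  have hr0 : 0 < r := hp0.trans hr
  have hs1 : 1 < r/p := (one_lt_div hp0).mpr hr
  set A := 2 * r / (r/p - 1) with hA
  set k1 : ℕ := max 3 (⌈Real.exp A⌉₊ + 1) with hk1def
  set C1 : ℝ := (((r/p - 1)/2) * 2 ^ (-(r/p)))⁻¹ with hC1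
  have hC1pos : 0 < C1 :=
    inv_pos.mpr (mul_pos (by linarith) (Real.rpow_pos_of_pos (by norm_num) _))
  have hk13 : 3 ≤ k1 := le_max_left _ _
  have hk1log : ∀ k : ℕ, k1 ≤ k → A ≤ Real.log k := by
    intro k hk
    have h1 : Real.exp A ≤ (k:ℝ) := by
      calc Real.exp A ≤ (⌈Real.exp A⌉₊ : ℝ) := Nat.le_ceil _
        _ ≤ (k:ℝ) := by
            have : ⌈Real.exp A⌉₊ ≤ k := le_trans (by omega) (le_trans (le_max_right 3 _) hk)
            exact_mod_cast this
    calc A = Real.log (Real.exp A) := (Real.log_exp A).symm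
      _ ≤ Real.log k := Real.log_le_log (Real.exp_pos A) h1
  refine ⟨(k1:ℝ) + C1, by positivity, ?_⟩
  intro x hx t
  rcases eq_or_lt_of_le hx with hx0 | hx0
  · rw [← hx0, Real.zero_rpow hr0.ne', Real.zero_rpow hp0.ne']
    simp
  -- x > 0
  have hxp : (0:ℝ) ≤ x ^ p := Real.rpow_nonneg hx0.le p
  rw [← Finset.sum_filter_add_sum_filter_not t (fun k => k < k1)]
  have hpart1 : ∑ k ∈ t.filter (fun k => k < k1),
      (if x ^ r ≤ (k:ℝ) ^ (r/p) / Log (k:ℝ) ^ (r^2/(r-p))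
        then Log (k:ℝ) ^ r / (k:ℝ) ^ (r/p) * x ^ r else 0) ≤ (k1:ℝ) * x ^ p := by
    have hterm : ∀ k ∈ t.filter (fun k => k < k1),
        (if x ^ r ≤ (k:ℝ) ^ (r/p) / Log (k:ℝ) ^ (r^2/(r-p))
          then Log (k:ℝ) ^ r / (k:ℝ) ^ (r/p) * x ^ r else 0) ≤ x ^ p := by
      intro k _
      split_ifs with hcond
      · rcases Nat.eq_zero_or_pos k with rfl | hk1'
        · rw [Nat.cast_zero, Real.zero_rpow (by positivity : r/p ≠ 0), div_zero, zero_mul]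
          exact hxp
        · exact term_le p r hp0 hr k hk1' x hx0 hcond
      · exact hxp
    calc ∑ k ∈ t.filter (fun k => k < k1),
        (if x ^ r ≤ (k:ℝ) ^ (r/p) / Log (k:ℝ) ^ (r^2/(r-p))
          then Log (k:ℝ) ^ r / (k:ℝ) ^ (r/p) * x ^ r else 0)
        ≤ ∑ _k ∈ t.filter (fun k => k < k1), x ^ p := Finset.sum_le_sum hterm
      _ = ((t.filter (fun k => k < k1)).card : ℝ) * x ^ p := by
          rw [Finset.sum_const, nsmul_eq_mul]
      _ ≤ (k1:ℝ) * x ^ p := by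
          apply mul_le_mul_of_nonneg_right _ hxp
          have hsub : t.filter (fun k => k < k1) ⊆ Finset.range k1 := by
            intro k hk
            rw [Finset.mem_range]
            exact (Finset.mem_filter.mp hk).2
          have := Finset.card_le_card hsub
          rw [Finset.card_range] at this
          exact_mod_cast this
  have hpart2 : ∑ k ∈ t.filter (fun k => ¬ k < k1),
      (if x ^ r ≤ (k:ℝ) ^ (r/p) / Log (k:ℝ) ^ (r^2/(r-p))
        then Log (k:ℝ) ^ r / (k:ℝ) ^ (r/p) * x ^ r else 0) ≤ C1 * x ^ p := by
    set t2 := t.filter (fun k => ¬ k < k1) with ht2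
    have hrw : ∑ k ∈ t2,
        (if x ^ r ≤ (k:ℝ) ^ (r/p) / Log (k:ℝ) ^ (r^2/(r-p))
          then Log (k:ℝ) ^ r / (k:ℝ) ^ (r/p) * x ^ r else 0)
        = ∑ k ∈ t2.filter (fun k : ℕ => x ^ r ≤ (k:ℝ) ^ (r/p) / Log (k:ℝ) ^ (r^2/(r-p))),
            ccf p r k * x ^ r :=
      (Finset.sum_filter (fun k : ℕ => x ^ r ≤ (k:ℝ) ^ (r/p) / Log (k:ℝ) ^ (r^2/(r-p)))
        (fun k : ℕ => ccf p r k * x ^ r)).symm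
    rw [hrw]
    set U := t2.filter (fun k : ℕ => x ^ r ≤ (k:ℝ) ^ (r/p) / Log (k:ℝ) ^ (r^2/(r-p))) with hU
    by_cases hUne : U.Nonempty
    · set K := U.min' hUne with hK
      have hKmem : K ∈ U := U.min'_mem hUne
      have hKcond : x ^ r ≤ (K:ℝ) ^ (r/p) / Log (K:ℝ) ^ (r^2/(r-p)) :=
        (Finset.mem_filter.mp hKmem).2
      have hKk1 : k1 ≤ K := by
        have := (Finset.mem_filter.mp ((Finset.mem_filter.mp hKmem).1)).2
        omega
      set N := U.max' hUne with hN
      have hsub : U ⊆ Finset.Icc K N :=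
        fun k hk => Finset.mem_Icc.mpr ⟨U.min'_le k hk, U.le_max' k hk⟩
      have h1 : ∑ k ∈ U, ccf p r k ≤ C1 * FFf p r K := by
        calc ∑ k ∈ U, ccf p r k ≤ ∑ k ∈ Finset.Icc K N, ccf p r k :=
              Finset.sum_le_sum_of_subset_of_nonneg hsub (fun k _ _ => ccf_nonneg p r k)
          _ ≤ C1 * FFf p r K := tail_lemma p r hp0 hr k1 hk13 hk1log K N hKk1
      have h2 : x ^ r * FFf p r K ≤ x ^ p :=
        termK_le p r hp0 hr K (by omega) x hx0 hKcond
      calc ∑ k ∈ U, ccf p r k * x ^ r = (∑ k ∈ U, ccf p r k) * x ^ r := by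
            rw [Finset.sum_mul]
        _ ≤ (C1 * FFf p r K) * x ^ r :=
            mul_le_mul_of_nonneg_right h1 (Real.rpow_nonneg hx0.le r)
        _ = C1 * (x ^ r * FFf p r K) := by ring
        _ ≤ C1 * x ^ p := mul_le_mul_of_nonneg_left h2 hC1pos.le
    · rw [Finset.not_nonempty_iff_eq_empty] at hUne
      rw [hUne, Finset.sum_empty]
      positivity
  calc _ ≤ (k1:ℝ) * x ^ p + C1 * x ^ p := add_le_add hpart1 hpart2
    _ = ((k1:ℝ) + C1) * x ^ p := by ring

theorem stmt_10 (p r : ℝ) (hp0 : 0 < p) (hp2 : p < 2) (hr : p < r) :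
    ∃ C : ℝ, 0 < C ∧
      ∀ (Ω : Type) [MeasurableSpace Ω] (μ : Measure Ω) [IsProbabilityMeasure μ]
        (X : Ω → ℝ), Measurable X → Integrable (fun ω => |X ω| ^ p) μ →
        ∑' k : ℕ, ENNReal.ofReal (Log k ^ r / (k : ℝ) ^ (r / p) *
            ∫ ω in {ω | |X ω| ^ r ≤ (k : ℝ) ^ (r / p) / Log k ^ (r ^ 2 / (r - p))},
              |X ω| ^ r ∂μ)
          ≤ ENNReal.ofReal (C * ∫ ω, |X ω| ^ p ∂μ) := by
  obtain ⟨C, hC, hkey⟩ := real_key p r hp0 hr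
  refine ⟨C, hC, ?_⟩
  intro Ω _ μ _ X hX hint
  have hgmeas : Measurable (fun ω => |X ω| ^ r) := by fun_prop
  have hgnn : ∀ ω : Ω, 0 ≤ |X ω| ^ r := fun ω => Real.rpow_nonneg (abs_nonneg _) r
  set A : ℕ → Set Ω :=
    fun k => {ω | |X ω| ^ r ≤ (k : ℝ) ^ (r / p) / Log k ^ (r ^ 2 / (r - p))} with hAdef
  have hA : ∀ k, MeasurableSet (A k) := fun k => measurableSet_le hgmeas measurable_const
  have hterm : ∀ k : ℕ, ENNReal.ofReal (Log k ^ r / (k : ℝ) ^ (r / p) *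
        ∫ ω in A k, |X ω| ^ r ∂μ)
      = ∫⁻ ω, ENNReal.ofReal (Log k ^ r / (k : ℝ) ^ (r / p)) *
          (A k).indicator (fun ω => ENNReal.ofReal (|X ω| ^ r)) ω ∂μ := by
    intro k
    have hc0 : 0 ≤ Log (k:ℝ) ^ r / (k:ℝ) ^ (r / p) := ccf_nonneg p r k
    have hInt : Integrable (fun ω => |X ω| ^ r) (μ.restrict (A k)) := by
      apply Integrable.mono'
        (integrable_const (max ((k:ℝ) ^ (r / p) / Log (k:ℝ) ^ (r ^ 2 / (r - p))) 0))
        hgmeas.aestronglyMeasurable.restrict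
      refine (ae_restrict_mem (hA k)).mono (fun ω hω => ?_)
      rw [Real.norm_eq_abs, abs_of_nonneg (hgnn ω)]
      exact le_max_of_le_left hω
    rw [ENNReal.ofReal_mul hc0, MeasureTheory.ofReal_integral_eq_lintegral_ofReal hInt
      (Filter.Eventually.of_forall (fun ω => hgnn ω))]
    rw [← MeasureTheory.lintegral_indicator (hA k)]
    rw [← MeasureTheory.lintegral_const_mul' _ _ ENNReal.ofReal_ne_top]
  have hpt : ∀ ω : Ω, (∑' k : ℕ, ENNReal.ofReal (Log k ^ r / (k : ℝ) ^ (r / p)) *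
        (A k).indicator (fun ω => ENNReal.ofReal (|X ω| ^ r)) ω)
      ≤ ENNReal.ofReal (C * |X ω| ^ p) := by
    intro ω
    rw [ENNReal.tsum_eq_iSup_sum]
    apply iSup_le
    intro t
    have hsum : ∑ k ∈ t, ENNReal.ofReal (Log k ^ r / (k : ℝ) ^ (r / p)) *
          (A k).indicator (fun ω => ENNReal.ofReal (|X ω| ^ r)) ω
        = ENNReal.ofReal (∑ k ∈ t,
            (if |X ω| ^ r ≤ (k:ℝ) ^ (r/p) / Log (k:ℝ) ^ (r^2/(r-p))
              then Log (k:ℝ) ^ r / (k:ℝ) ^ (r/p) * |X ω| ^ r else 0)) := by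
      rw [ENNReal.ofReal_sum_of_nonneg]
      · apply Finset.sum_congr rfl
        intro k _
        rw [Set.indicator_apply]
        by_cases hk : ω ∈ A k
        · have hc : |X ω| ^ r ≤ (k:ℝ) ^ (r/p) / Log (k:ℝ) ^ (r^2/(r-p)) := hk
          have hc0 : (0:ℝ) ≤ Log (k:ℝ) ^ r / (k:ℝ) ^ (r/p) := ccf_nonneg p r k
          rw [if_pos hk, if_pos hc, ← ENNReal.ofReal_mul hc0]
        · have hc : ¬ |X ω| ^ r ≤ (k:ℝ) ^ (r/p) / Log (k:ℝ) ^ (r^2/(r-p)) := hk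
          rw [if_neg hk, if_neg hc, mul_zero, ENNReal.ofReal_zero]
      · intro k _
        split_ifs
        · exact mul_nonneg (ccf_nonneg p r k) (hgnn ω)
        · exact le_refl _
    rw [hsum]
    exact ENNReal.ofReal_le_ofReal (hkey (|X ω|) (abs_nonneg _) t)
  have hfin : ∫⁻ ω, ENNReal.ofReal (C * |X ω| ^ p) ∂μ
      = ENNReal.ofReal (C * ∫ ω, |X ω| ^ p ∂μ) := by
    have h1 : ∫⁻ ω, ENNReal.ofReal (C * |X ω| ^ p) ∂μ
        = ∫⁻ ω, ENNReal.ofReal C * ENNReal.ofReal (|X ω| ^ p) ∂μ :=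
      lintegral_congr fun ω => ENNReal.ofReal_mul hC.le
    rw [h1, MeasureTheory.lintegral_const_mul' _ _ ENNReal.ofReal_ne_top,
      ← MeasureTheory.ofReal_integral_eq_lintegral_ofReal hint
        (Filter.Eventually.of_forall (fun ω => Real.rpow_nonneg (abs_nonneg _) p)),
      ← ENNReal.ofReal_mul hC.le]
  calc ∑' k : ℕ, ENNReal.ofReal (Log k ^ r / (k : ℝ) ^ (r / p) *
          ∫ ω in A k, |X ω| ^ r ∂μ)
      = ∑' k : ℕ, ∫⁻ ω, ENNReal.ofReal (Log k ^ r / (k : ℝ) ^ (r / p)) *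
          (A k).indicator (fun ω => ENNReal.ofReal (|X ω| ^ r)) ω ∂μ := tsum_congr hterm
    _ = ∫⁻ ω, (∑' k : ℕ, ENNReal.ofReal (Log k ^ r / (k : ℝ) ^ (r / p)) *
          (A k).indicator (fun ω => ENNReal.ofReal (|X ω| ^ r)) ω) ∂μ :=
        (MeasureTheory.lintegral_tsum (fun k =>
          (measurable_const.mul (hgmeas.ennreal_ofReal.indicator (hA k))).aemeasurable)).symm
    _ ≤ ∫⁻ ω, ENNReal.ofReal (C * |X ω| ^ p) ∂μ := lintegral_mono hpt
    _ = ENNReal.ofReal (C * ∫ ω, |X ω| ^ p ∂μ) := hfin
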